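/- There exists a natural number N such that for all n ≥ N, the mid-near false-negative probability is strictly smaller than the uniform-sampling false-negative probability: 1 − P̄(n) < 10 / n. -/

import Mathlib

/-- The probability that a mid-near sample is not a false negative. -/
noncomputable def Pbar (n : ℕ) : ℝ :=
  (((n : ℝ) + 45) * ((n : ℝ) - 10) * ((n : ℝ) - 11) * ((n : ℝ) - 12) *
      ((n : ℝ) - 13) * ((n : ℝ) - 14)) /
    ((n : ℝ) * ((n : ℝ) - 1) * ((n : ℝ) - 2) * ((n : ℝ) - 3) *
      ((n : ℝ) - 4) * ((n : ℝ) - 5))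

/-- Eventually, the mid-near false-negative probability is strictly smaller than
the uniform-sampling false-negative probability `10/n`. -/
theorem midnear_beats_uniform_eventually :
    ∃ N : ℕ, ∀ n : ℕ, N ≤ n → 1 - Pbar n < 10 / (n : ℝ) := by
  use 1000
  intro n hn
  have hx : (1000 : ℝ) ≤ (n : ℝ) := by exact_mod_cast hn
  set x : ℝ := (n : ℝ) with hxdef
  have hx0 : (0 : ℝ) < x := by linarith
  have hD : (0 : ℝ) < x * (x - 1) * (x - 2) * (x - 3) * (x - 4) * (x - 5) := by
    have h1 : (0:ℝ) < x - 1 := by linarith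
    have h2 : (0:ℝ) < x - 2 := by linarith
    have h3 : (0:ℝ) < x - 3 := by linarith
    have h4 : (0:ℝ) < x - 4 := by linarith
    have h5 : (0:ℝ) < x - 5 := by linarith
    positivity
  have h1 : (x - 10) / x <
      ((x + 45) * (x - 10) * (x - 11) * (x - 12) * (x - 13) * (x - 14)) /
        (x * (x - 1) * (x - 2) * (x - 3) * (x - 4) * (x - 5)) := by
    rw [div_lt_div_iff₀ hx0 hD]
    nlinarith [sq_nonneg (x - 1000), sq_nonneg x, mul_pos hx0 hx0,
      mul_pos (mul_pos hx0 hx0) hx0, mul_pos (mul_pos (mul_pos hx0 hx0) hx0) hx0,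
      sq_nonneg (x*x - 1000*x), sq_nonneg (x*x*x - 1000*x*x)]
  have h2 : 1 - (x - 10) / x = 10 / x := by
    field_simp
    ring
  rw [Pbar]
  rw [← hxdef] at *
  linarith [h1]
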